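/- Let m, n be coprime positive integers and γ an (m,n)-Dyck path. Under the insertion map γ ↦ γ* (each horizontal step ending at (a,b) becomes a step ending at (a+b,b), each vertical step from (a',b') becomes a step from (a'+b',b')), a pair (r_h, r_v) ∈ O(γ) satisfies the common-transversal condition in γ (i.e., some line of slope n/m meets both steps) if and only if the corresponding pair (r_h*, r_v*) in γ* satisfies condition (1A): the line of slope n/(m+n) through the left endpoint of r_h* intersects r_v*. Equivalently, H(γ) = H₁(γ*) ∩ ι(O(γ)). -/

import Mathlib

open scoped Classical
open Finset

/-- A lattice path is encoded as a list of steps: `false` = horizontal step `(1,0)`,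
`true` = vertical step `(0,1)`.  `IsDyck m n w` says `w` is an `(m,n)`-Dyck path:
it has `m` horizontal and `n` vertical steps and every intermediate lattice point
`(x,y)` satisfies `n*x ≤ m*y` (the path stays weakly above the diagonal `y=(n/m)x`). -/
def IsDyck (m n : ℕ) (w : List Bool) : Prop :=
  w.count false = m ∧ w.count true = n ∧
    ∀ p ∈ w.inits, n * p.count false ≤ m * p.count true

/-- `x`-coordinate of the point of the path reached after the first `i` steps. -/
def ptX (w : List Bool) (i : ℕ) : ℤ := ((w.take i).count false : ℤ)

/-- `y`-coordinate of the point of the path reached after the first `i` steps. -/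
def ptY (w : List Bool) (i : ℕ) : ℤ := ((w.take i).count true : ℤ)

/-- `O(γ)`: pairs `(i,j)` of a horizontal step `i` and a vertical step `j`
appearing later in the path. -/
def Opairs (w : List Bool) : Finset (ℕ × ℕ) :=
  (Finset.range w.length ×ˢ Finset.range w.length).filter
    (fun ij => ij.1 < ij.2 ∧ w[ij.1]? = some false ∧ w[ij.2]? = some true)

/-- The set of (bottom-left corners of) complete unit lattice squares lying between the
path and the diagonal `y = (n/m)x`: the square `[x,x+1]×[y,y+1]` lies weakly above the
diagonal and strictly below the path. -/
noncomputable def areaSet (m n : ℕ) (w : List Bool) : Finset (ℕ × ℕ) :=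
  ((Finset.range m) ×ˢ (Finset.range n)).filter (fun xy =>
    n * (xy.1 + 1) ≤ m * xy.2 ∧
    ∃ i < w.length, w[i]? = some false ∧
      (w.take (i+1)).count false = xy.1 + 1 ∧ xy.2 + 1 ≤ (w.take (i+1)).count true)

/-- `area(γ)`: the number of complete unit lattice squares between the path and the
diagonal. -/
noncomputable def area (m n : ℕ) (w : List Bool) : ℕ := (areaSet m n w).card

/-- Some line of slope `n/m` (i.e. `{(x,y) | n*x - m*y = c}`) meets both the closed
horizontal step segment `i` and the closed vertical step segment `j`. -/
def MeetsBoth (m n : ℕ) (w : List Bool) (i j : ℕ) : Prop :=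
  ∃ c : ℝ,
    (∃ x : ℝ, (ptX w i : ℝ) ≤ x ∧ x ≤ (ptX w i : ℝ) + 1 ∧
      (n : ℝ) * x - (m : ℝ) * (ptY w i : ℝ) = c) ∧
    (∃ y : ℝ, (ptY w j : ℝ) ≤ y ∧ y ≤ (ptY w j : ℝ) + 1 ∧
      (n : ℝ) * (ptX w j : ℝ) - (m : ℝ) * y = c)

/-- Condition (1A): the line of slope `n/m` through the left endpoint `(a-1,b)` of the
horizontal step `i` meets the closed vertical step segment `j`. -/
def Cond1A (m n : ℕ) (w : List Bool) (i j : ℕ) : Prop :=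
  ∃ y : ℝ, (ptY w j : ℝ) ≤ y ∧ y ≤ (ptY w j : ℝ) + 1 ∧
    (n : ℝ) * ((ptX w j : ℝ) - (ptX w i : ℝ)) = (m : ℝ) * (y - (ptY w i : ℝ))

/-- Condition (2A): the line of slope `n/m` through the top endpoint `(a',b'+1)` of the
vertical step `j` meets the closed horizontal step segment `i`. -/
def Cond2A (m n : ℕ) (w : List Bool) (i j : ℕ) : Prop :=
  ∃ x : ℝ, (ptX w i : ℝ) ≤ x ∧ x ≤ (ptX w i : ℝ) + 1 ∧
    (n : ℝ) * (x - (ptX w j : ℝ)) = (m : ℝ) * ((ptY w i : ℝ) - ((ptY w j : ℝ) + 1))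

/-- `H(γ)`: pairs in `O(γ)` admitting a common transversal line parallel to the
diagonal. -/
noncomputable def Hpairs (m n : ℕ) (w : List Bool) : Finset (ℕ × ℕ) :=
  (Opairs w).filter (fun ij => MeetsBoth m n w ij.1 ij.2)

/-- `H₁(γ)`: pairs in `O(γ)` satisfying condition (1A). -/
noncomputable def H1pairs (m n : ℕ) (w : List Bool) : Finset (ℕ × ℕ) :=
  (Opairs w).filter (fun ij => Cond1A m n w ij.1 ij.2)

/-- `H₂(γ)`: pairs in `O(γ)` satisfying condition (2A). -/
noncomputable def H2pairs (m n : ℕ) (w : List Bool) : Finset (ℕ × ℕ) :=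
  (Opairs w).filter (fun ij => Cond2A m n w ij.1 ij.2)

/-- The line of slope `n/m` through the point `(px,py)` meets the closed segment of the
horizontal step `i`. -/
def lineHitsH (m n : ℕ) (w : List Bool) (px py : ℤ) (i : ℕ) : Prop :=
  w[i]? = some false ∧
    ∃ x : ℝ, (ptX w i : ℝ) ≤ x ∧ x ≤ (ptX w i : ℝ) + 1 ∧
      (n : ℝ) * (x - (px : ℝ)) = (m : ℝ) * ((ptY w i : ℝ) - (py : ℝ))

/-- The line of slope `n/m` through the point `(px,py)` meets the closed segment of the
vertical step `j`. -/
def lineHitsV (m n : ℕ) (w : List Bool) (px py : ℤ) (j : ℕ) : Prop :=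
  w[j]? = some true ∧
    ∃ y : ℝ, (ptY w j : ℝ) ≤ y ∧ y ≤ (ptY w j : ℝ) + 1 ∧
      (n : ℝ) * ((ptX w j : ℝ) - (px : ℝ)) = (m : ℝ) * (y - (py : ℝ))

/-- Outer vertices of the path, encoded by the index `j` of a vertical step that is
immediately followed by a horizontal step; the vertex itself is the point
`(ptX w (j+1), ptY w (j+1))`. -/
def outerIdx (w : List Bool) : Finset ℕ :=
  (Finset.range w.length).filter
    (fun j => w[j]? = some true ∧ w[j+1]? = some false)

/-- The perpendicular distance from the diagonal of the outer vertex indexed by `j`,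
measured by `m*y - n*x` (proportional to the true distance). -/
def diagDist (m n : ℕ) (w : List Bool) (j : ℕ) : ℤ :=
  (m : ℤ) * ptY w (j+1) - (n : ℤ) * ptX w (j+1)

/-- `V(γ)`: outer vertices other than one farthest from the diagonal. -/
def Vset (m n : ℕ) (w : List Bool) : Finset ℕ :=
  (outerIdx w).filter (fun j => ∃ j' ∈ outerIdx w, diagDist m n w j < diagDist m n w j')

/-- `k(p)`: the number of horizontal steps of the path, other than the horizontal step
starting at the outer vertex `p` (indexed by `j`), met by the line of slope `n/m`
through `p`. -/
noncomputable def kH (m n : ℕ) (w : List Bool) (j : ℕ) : ℕ :=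
  ((Finset.range w.length).filter
    (fun i => i ≠ j + 1 ∧ lineHitsH m n w (ptX w (j+1)) (ptY w (j+1)) i)).card

/-- The number of vertical steps of the path, other than the vertical step ending at the
outer vertex `p` (indexed by `j`), met by the line of slope `n/m` through `p`. -/
noncomputable def kV (m n : ℕ) (w : List Bool) (j : ℕ) : ℕ :=
  ((Finset.range w.length).filter
    (fun i => i ≠ j ∧ lineHitsV m n w (ptX w (j+1)) (ptY w (j+1)) i)).card

/-- `k₁(p)`: the number of vertical steps occurring after the outer vertex `p`
(indexed by `j`) met by the line of slope `n/m` through `p`. -/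
noncomputable def k1 (m n : ℕ) (w : List Bool) (j : ℕ) : ℕ :=
  ((Finset.range w.length).filter
    (fun i => j < i ∧ lineHitsV m n w (ptX w (j+1)) (ptY w (j+1)) i)).card

/-- `k₂(p)`: the number of horizontal steps occurring before the outer vertex `p`
(indexed by `j`) met by the line of slope `n/m` through `p`. -/
noncomputable def k2 (m n : ℕ) (w : List Bool) (j : ℕ) : ℕ :=
  ((Finset.range w.length).filter
    (fun i => i ≤ j ∧ lineHitsH m n w (ptX w (j+1)) (ptY w (j+1)) i)).card

/-- The insertion map `γ ↦ γ*`: insert one horizontal step immediately after each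
vertical step. -/
def star : List Bool → List Bool
  | [] => []
  | true :: w => true :: false :: star w
  | false :: w => false :: star w

/-- The index in `γ*` of the step corresponding to the step of index `i` in `γ`. -/
def starIdx (w : List Bool) (i : ℕ) : ℕ := i + (w.take i).count true

/-- A Dyck path is rugged if every vertical step is immediately followed by a
horizontal step. -/
def Rugged (w : List Bool) : Prop :=
  ∀ i, w[i]? = some true → w[i+1]? = some false

section Aux

lemma star_append (a b : List Bool) : star (a ++ b) = star a ++ star b := by
  induction a with
  | nil => rfl
  | cons h t ih => cases h <;> simp [_root_.star, ih]

lemma star_count_true (p : List Bool) : (star p).count true = p.count true := by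
  induction p with
  | nil => rfl
  | cons h t ih => cases h <;> simp [_root_.star, ih, List.count_cons]

lemma count_false_add_count_true (t : List Bool) :
    t.count false + t.count true = t.length := by
  induction t with
  | nil => rfl
  | cons h t ih => cases h <;> simp [List.count_cons] <;> omega

lemma star_count_false (p : List Bool) :
    (star p).count false = p.count false + p.count true := by
  induction p with
  | nil => rfl
  | cons h t ih =>
    have := count_false_add_count_true t
    cases h <;> simp [_root_.star, ih, List.count_cons] <;> omega

lemma star_length (p : List Bool) : (star p).length = p.length + p.count true := by
  induction p with
  | nil => rfl
  | cons h t ih => cases h <;> simp [_root_.star, ih, List.count_cons] <;> ring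

lemma count_true_take_le (w : List Bool) (i : ℕ) :
    (w.take i).count true ≤ w.count true :=
  List.Sublist.count_le true (List.take_sublist i w)

lemma star_take (w : List Bool) (i : ℕ) :
    (star w).take (starIdx w i) = star (w.take i) := by
  rcases le_or_gt i w.length with hi | hi
  · have h1 : star w = star (w.take i) ++ star (w.drop i) := by
      rw [← star_append, List.take_append_drop]
    have h2 : (star (w.take i)).length = starIdx w i := by
      rw [star_length, List.length_take, min_eq_left hi, starIdx]
    rw [h1, List.take_append_of_le_length (le_of_eq h2.symm),
      List.take_of_length_le (le_of_eq h2)]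
  · have htake : w.take i = w := List.take_of_length_le hi.le
    rw [htake, List.take_of_length_le]
    rw [star_length, starIdx, htake]
    omega

lemma star_get (w : List Bool) (i : ℕ) (hi : i < w.length) :
    (star w)[starIdx w i]? = w[i]? := by
  have h1 : star w = star (w.take i) ++ star (w.drop i) := by
    rw [← star_append, List.take_append_drop]
  have h2 : (star (w.take i)).length = starIdx w i := by
    rw [star_length, List.length_take, min_eq_left hi.le, starIdx]
  rw [h1, List.getElem?_append_right (le_of_eq h2), h2, Nat.sub_self]
  have hdrop : w.drop i = w[i] :: w.drop (i + 1) := List.drop_eq_getElem_cons hi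
  have hget : w[i]? = some w[i] := by
    rw [List.getElem?_eq_getElem hi]
  rw [hdrop, hget]
  cases w[i] <;> simp [_root_.star]

lemma ptX_star (w : List Bool) (i : ℕ) :
    ptX (star w) (starIdx w i) = ptX w i + ptY w i := by
  unfold ptX ptY
  rw [star_take, star_count_false]
  push_cast
  ring

lemma ptY_star (w : List Bool) (i : ℕ) :
    ptY (star w) (starIdx w i) = ptY w i := by
  unfold ptY
  rw [star_take, star_count_true]

lemma starIdx_strictMono (w : List Bool) {i j : ℕ} (hij : i < j) :
    starIdx w i < starIdx w j := by
  unfold starIdx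
  have : (w.take i).count true ≤ (w.take j).count true := by
    have : (w.take j).take i = w.take i := by
      rw [List.take_take, min_eq_left hij.le]
    rw [← this]
    exact List.Sublist.count_le true (List.take_sublist i _)
  omega

lemma starIdx_lt_length (w : List Bool) {j : ℕ} (hj : j < w.length) :
    starIdx w j < (star w).length := by
  rw [star_length, starIdx]
  have := count_true_take_le w j
  omega

lemma starIdx_mem_Opairs {w : List Bool} {i j : ℕ} (h : (i, j) ∈ Opairs w) :
    (starIdx w i, starIdx w j) ∈ Opairs (star w) := by
  simp only [Opairs, Finset.mem_filter, Finset.mem_product, Finset.mem_range] at h ⊢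
  obtain ⟨⟨hi, hj⟩, hlt, hgi, hgj⟩ := h
  refine ⟨⟨starIdx_lt_length w hi, starIdx_lt_length w hj⟩,
    starIdx_strictMono w hlt, ?_, ?_⟩
  · rw [star_get w i hi]; exact hgi
  · rw [star_get w j hj]; exact hgj

lemma meetsBoth_iff (m n : ℕ) (w : List Bool) (i j : ℕ) (hmn : 0 < m + n) :
    MeetsBoth m n w i j ↔
      (0 ≤ (n : ℤ) * (ptX w j - ptX w i) - m * (ptY w j - ptY w i) ∧
        (n : ℤ) * (ptX w j - ptX w i) - m * (ptY w j - ptY w i) ≤ m + n) := by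
  constructor
  · rintro ⟨c, ⟨x, hx1, hx2, hx3⟩, ⟨y, hy1, hy2, hy3⟩⟩
    have key : (((n : ℤ) * (ptX w j - ptX w i) - m * (ptY w j - ptY w i) : ℤ) : ℝ) =
        (n : ℝ) * (x - (ptX w i : ℝ)) + (m : ℝ) * (y - (ptY w j : ℝ)) := by
      push_cast
      linarith
    have hn0 : (0 : ℝ) ≤ n := by positivity
    have hm0 : (0 : ℝ) ≤ m := by positivity
    constructor
    · exact_mod_cast (by rw [key]; nlinarith :
        (0 : ℝ) ≤ ((n : ℤ) * (ptX w j - ptX w i) - m * (ptY w j - ptY w i) : ℤ))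
    · exact_mod_cast (by rw [key]; push_cast; nlinarith :
        (((n : ℤ) * (ptX w j - ptX w i) - m * (ptY w j - ptY w i) : ℤ) : ℝ) ≤ ((m + n : ℕ) : ℝ))
  · rintro ⟨h0, h1⟩
    have hmn' : (0 : ℝ) < (m : ℝ) + n := by
      have : (0 : ℝ) < ((m + n : ℕ) : ℝ) := by exact_mod_cast hmn
      push_cast at this
      linarith
    have h0' : (0 : ℝ) ≤ (n : ℝ) * ((ptX w j : ℝ) - ptX w i) - m * ((ptY w j : ℝ) - ptY w i) := by
      exact_mod_cast h0
    have h1' : (n : ℝ) * ((ptX w j : ℝ) - ptX w i) - m * ((ptY w j : ℝ) - ptY w i) ≤ (m : ℝ) + n := by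
      have : (n : ℝ) * ((ptX w j : ℝ) - ptX w i) - m * ((ptY w j : ℝ) - ptY w i) ≤ ((m + n : ℕ) : ℝ) := by
        exact_mod_cast h1
      push_cast at this
      linarith
    set D : ℝ := (n : ℝ) * ((ptX w j : ℝ) - ptX w i) - m * ((ptY w j : ℝ) - ptY w i) with hD
    set s : ℝ := D / ((m : ℝ) + n) with hs
    have hs0 : 0 ≤ s := div_nonneg h0' hmn'.le
    have hs1 : s ≤ 1 := by
      rw [hs, div_le_one hmn']
      exact h1'
    have hsum : ((m : ℝ) + n) * s = D := by
      rw [hs, mul_div_cancel₀ _ (ne_of_gt hmn')]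
    refine ⟨(n : ℝ) * ((ptX w i : ℝ) + s) - m * (ptY w i : ℝ),
      ⟨(ptX w i : ℝ) + s, by linarith, by linarith, rfl⟩,
      ⟨(ptY w j : ℝ) + s, by linarith, by linarith, ?_⟩⟩
    have : (n : ℝ) * s + m * s = D := by linarith [hsum]
    rw [hD] at this
    ring_nf
    ring_nf at this
    linarith

lemma cond1A_iff (M n : ℕ) (w : List Bool) (i j : ℕ) (hM : 0 < M) :
    Cond1A M n w i j ↔
      (0 ≤ (n : ℤ) * (ptX w j - ptX w i) - M * (ptY w j - ptY w i) ∧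
        (n : ℤ) * (ptX w j - ptX w i) - M * (ptY w j - ptY w i) ≤ M) := by
  have hM' : (0 : ℝ) < M := by exact_mod_cast hM
  constructor
  · rintro ⟨y, hy1, hy2, hy3⟩
    have key : (((n : ℤ) * (ptX w j - ptX w i) - M * (ptY w j - ptY w i) : ℤ) : ℝ) =
        (M : ℝ) * (y - (ptY w j : ℝ)) := by
      push_cast
      linarith
    constructor
    · exact_mod_cast (by rw [key]; nlinarith :
        (0 : ℝ) ≤ ((n : ℤ) * (ptX w j - ptX w i) - M * (ptY w j - ptY w i) : ℤ))
    · exact_mod_cast (by rw [key]; push_cast; nlinarith :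
        (((n : ℤ) * (ptX w j - ptX w i) - M * (ptY w j - ptY w i) : ℤ) : ℝ) ≤ ((M : ℕ) : ℝ))
  · rintro ⟨h0, h1⟩
    have h0' : (0 : ℝ) ≤ (n : ℝ) * ((ptX w j : ℝ) - ptX w i) - M * ((ptY w j : ℝ) - ptY w i) := by
      exact_mod_cast h0
    have h1' : (n : ℝ) * ((ptX w j : ℝ) - ptX w i) - M * ((ptY w j : ℝ) - ptY w i) ≤ M := by
      exact_mod_cast h1
    refine ⟨(ptY w i : ℝ) + (n : ℝ) * ((ptX w j : ℝ) - ptX w i) / M, ?_, ?_, ?_⟩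
    · rw [← sub_le_iff_le_add', le_div_iff₀ hM']
      linarith
    · rw [← le_sub_iff_add_le', div_le_iff₀ hM']
      linarith
    · field_simp
      ring

end Aux

/-- a pair in `O(γ)` has a common transversal in `γ` iff the corresponding
pair of `γ*` satisfies condition (1A); equivalently `H(γ) = H₁(γ*) ∩ ι(O(γ))`. -/
theorem statement11 (m n : ℕ) (hm : 0 < m) (hn : 0 < n) (h : Nat.Coprime m n)
    (w : List Bool) (hw : IsDyck m n w) :
    (∀ ij ∈ Opairs w,
      MeetsBoth m n w ij.1 ij.2 ↔
        Cond1A (m + n) n (star w) (starIdx w ij.1) (starIdx w ij.2)) ∧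
    (Hpairs m n w).image (fun ij => (starIdx w ij.1, starIdx w ij.2)) =
      H1pairs (m + n) n (star w) ∩
        (Opairs w).image (fun ij => (starIdx w ij.1, starIdx w ij.2)) := by
  have hmn : 0 < m + n := by omega
  have key : ∀ i j : ℕ, MeetsBoth m n w i j ↔
      Cond1A (m + n) n (star w) (starIdx w i) (starIdx w j) := by
    intro i j
    rw [meetsBoth_iff m n w i j hmn, cond1A_iff (m + n) n (star w) _ _ hmn,
      ptX_star, ptY_star, ptX_star, ptY_star]
    constructor <;> rintro ⟨h1, h2⟩ <;>
      exact ⟨by push_cast at *; linarith, by push_cast at *; linarith⟩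
  refine ⟨fun ij _ => key ij.1 ij.2, ?_⟩
  ext p
  simp only [Finset.mem_image, Finset.mem_inter, Hpairs, H1pairs, Finset.mem_filter]
  constructor
  · rintro ⟨ij, ⟨hO, hM⟩, rfl⟩
    have hO' : (ij.1, ij.2) ∈ Opairs w := by simpa using hO
    exact ⟨⟨by simpa using (starIdx_mem_Opairs hO'), (key ij.1 ij.2).1 hM⟩, ⟨ij, hO, rfl⟩⟩
  · rintro ⟨⟨_, hC⟩, ij, hO, rfl⟩
    exact ⟨ij, ⟨hO, (key ij.1 ij.2).2 hC⟩, rfl⟩
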